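/- arXiv:1007.4920 — 2 statements merged into one kernel-verified Lean document; each statement's English description precedes it below -/
import Mathlib

section
/- Let F, G : ℝ^d → ℝ^d be twice continuously differentiable vector fields, and define their Lie bracket by [F, G](x) = DG(x)·F(x) − DF(x)·G(x), where DF(x) denotes the derivative (Jacobian) of F at x. Fix X₀ ∈ ℝ^d and suppose there exist ε > 0 and maps φ^F, φ^G : (−ε, ε) × U → ℝ^d, defined on a neighborhood U of X₀, such that φ^F(0, x) = x, ∂φ^F/∂t (t, x) = F(φ^F(t, x)) for all t and x (and similarly for φ^G), and such that the composition Θ(t) = φ^G(−t, φ^F(−t, φ^G(t, φ^F(t, X₀)))) is defined for all t in a neighborhood of 0. Then there exist constants C > 0 and ε' > 0 such that ‖Θ(t) − X₀ − t² [F, G](X₀)‖ ≤ C |t|³ for all t ∈ (−ε', ε'). -/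
open Set Metric

variable {E : Type*} [NormedAddCommGroup E] [NormedSpace ℝ E]

lemma taylor_quad {V : E → E} (hV : Differentiable ℝ V) {X₀ : E} {r L2 : ℝ}
    (hL2n : 0 ≤ L2)
    (hL2 : ∀ y ∈ closedBall X₀ r, ∀ z ∈ closedBall X₀ r,
      ‖fderiv ℝ V y - fderiv ℝ V z‖ ≤ L2 * ‖y - z‖)
    {x y : E} (hx : x ∈ closedBall X₀ r) (hy : y ∈ closedBall X₀ r) :
    ‖V y - V x - fderiv ℝ V x (y - x)‖ ≤ L2 * ‖y - x‖ ^ 2 := by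
  have hseg : segment ℝ x y ⊆ closedBall X₀ r :=
    (convex_closedBall X₀ r).segment_subset hx hy
  have hb : ∀ z ∈ segment ℝ x y, ‖fderiv ℝ V z - fderiv ℝ V x‖ ≤ L2 * ‖y - x‖ := by
    intro z hz
    rw [segment_eq_image] at hz
    obtain ⟨θ, hθ, rfl⟩ := hz
    have h1 : (1 - θ) • x + θ • y - x = θ • (y - x) := by
      rw [smul_sub]; module
    refine (hL2 _ (hseg (by rw [segment_eq_image]; exact ⟨θ, hθ, rfl⟩)) x hx).trans ?_
    rw [h1, norm_smul, Real.norm_eq_abs, abs_of_nonneg hθ.1]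
    have hn : (0:ℝ) ≤ ‖y - x‖ := norm_nonneg _
    nlinarith [hθ.2, hθ.1, mul_nonneg hL2n hn]
  have := (convex_segment x y).norm_image_sub_le_of_norm_fderiv_le'
    (fun z _ => hV z) hb (left_mem_segment ℝ x y) (right_mem_segment ℝ x y)
  calc ‖V y - V x - fderiv ℝ V x (y - x)‖ ≤ L2 * ‖y - x‖ * ‖y - x‖ := this
    _ = L2 * ‖y - x‖ ^ 2 := by ring


lemma flow_step_nonneg {V : E → E} (hV : Differentiable ℝ V)
    {X₀ : E} {r M L L2 : ℝ} (hM0 : 0 ≤ M) (hL0 : 0 ≤ L) (hL20 : 0 ≤ L2)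
    (hM : ∀ y ∈ closedBall X₀ r, ‖V y‖ ≤ M)
    (hL : ∀ y ∈ closedBall X₀ r, ∀ z ∈ closedBall X₀ r, ‖V y - V z‖ ≤ L * ‖y - z‖)
    (hL2 : ∀ y ∈ closedBall X₀ r, ∀ z ∈ closedBall X₀ r,
      ‖fderiv ℝ V y - fderiv ℝ V z‖ ≤ L2 * ‖y - z‖)
    (hLop : ∀ y ∈ closedBall X₀ r, ‖fderiv ℝ V y‖ ≤ L)
    {x : E} (hx : x ∈ closedBall X₀ (r/2))
    {ε : ℝ} {ψ : ℝ → E} (hψ0 : ψ 0 = x)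
    (hψ : ∀ s ∈ Ioo (-ε) ε, HasDerivAt ψ (V (ψ s)) s)
    {t : ℝ} (ht0 : 0 ≤ t) (htε : t < ε) (htr : t * (M + 1) ≤ r / 2) :
    ‖ψ t - x‖ ≤ M * t ∧
    ‖ψ t - x - t • V x‖ ≤ L * M * t ^ 2 ∧
    ‖ψ t - x - t • V x - (t ^ 2 / 2) • fderiv ℝ V x (V x)‖
      ≤ (L2 * M ^ 2 + L ^ 2 * M) * t ^ 3 := by
  have hε0 : 0 < ε := lt_of_le_of_lt ht0 htε
  have hr : 0 ≤ r / 2 := le_trans dist_nonneg (mem_closedBall.1 hx)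
  have hIcc : Icc 0 t ⊆ Ioo (-ε) ε := fun s hs =>
    ⟨lt_of_lt_of_le (neg_neg_of_pos hε0) hs.1, lt_of_le_of_lt hs.2 htε⟩
  have hxK : x ∈ closedBall X₀ r := by
    rw [mem_closedBall] at hx ⊢; linarith [mem_closedBall.1 hx]
  -- invariance
  have key : Icc 0 t ⊆ {s | ‖ψ s - x‖ ≤ M * s} := by
    have hcψ : ContinuousOn ψ (Icc 0 t) := fun s hs =>
      ((hψ s (hIcc hs)).continuousAt).continuousWithinAt
    apply IsClosed.Icc_subset_of_forall_exists_gt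
    · have hcont : ContinuousOn (fun s => ‖ψ s - x‖ - M * s) (Icc 0 t) := by
        apply ContinuousOn.sub
        · exact (hcψ.sub continuousOn_const).norm
        · exact (continuous_const.mul continuous_id).continuousOn
      have : {s | ‖ψ s - x‖ ≤ M * s} ∩ Icc 0 t
          = Icc 0 t ∩ (fun s => ‖ψ s - x‖ - M * s) ⁻¹' Iic 0 := by
        ext s; simp only [mem_inter_iff, mem_setOf_eq, mem_preimage, mem_Iic, sub_nonpos]
        tauto
      rw [this]
      exact hcont.preimage_isClosed_of_isClosed isClosed_Icc isClosed_Iic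
    · simp [hψ0]
    · rintro s ⟨hsS, hs0, hst⟩ y hy
      have hsS' : ‖ψ s - x‖ ≤ M * s := hsS
      have htpos : 0 < t := lt_of_le_of_lt hs0 hst
      have hψsK : ‖ψ s - X₀‖ ≤ r - t := by
        have h1 : ‖ψ s - X₀‖ ≤ ‖ψ s - x‖ + ‖x - X₀‖ := norm_sub_le_norm_sub_add_norm_sub _ _ _
        have h2 : ‖x - X₀‖ ≤ r / 2 := by
          rw [← dist_eq_norm]; exact mem_closedBall.1 hx
        have h3 : M * s ≤ M * t := mul_le_mul_of_nonneg_left hst.le hM0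
        nlinarith [hsS', htr]
      obtain ⟨η, hη0, hη⟩ : ∃ η > 0, ∀ u, dist u s < η → dist (ψ u) (ψ s) < t := by
        have := (hψ s (hIcc ⟨hs0, le_of_lt hst⟩)).continuousAt
        exact Metric.continuousAt_iff.1 this t htpos
      set η' := min η (ε - s) with hη'
      have hη'0 : 0 < η' := lt_min hη0 (by linarith [(hIcc ⟨hs0, le_of_lt hst⟩).2])
      set u := min y (s + η' / 2) with hu
      have hus : s < u := lt_min hy (by linarith)
      have huη : u - s < η' := by
        have : u ≤ s + η' / 2 := min_le_right _ _
        linarith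
      have hK' : ∀ v ∈ Icc s u, ψ v ∈ closedBall X₀ r := by
        intro v hv
        have hd : dist (ψ v) (ψ s) < t := by
          apply hη
          rw [Real.dist_eq, abs_of_nonneg (by linarith [hv.1])]
          have : η' ≤ η := min_le_left _ _
          linarith [hv.2, huη, hη'0]
        rw [mem_closedBall, dist_eq_norm]
        calc ‖ψ v - X₀‖ ≤ ‖ψ v - ψ s‖ + ‖ψ s - X₀‖ := norm_sub_le_norm_sub_add_norm_sub _ _ _
          _ ≤ t + (r - t) := by
              rw [← dist_eq_norm]; exact add_le_add hd.le hψsK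
          _ = r := by ring
      have hIoo' : Icc s u ⊆ Ioo (-ε) ε := by
        intro v hv
        constructor
        · linarith [hv.1, hs0, hε0]
        · have : u < ε := by
            have : u ≤ s + η' / 2 := min_le_right _ _
            have h2 : η' ≤ ε - s := min_le_right _ _
            linarith
          linarith [hv.2]
      have hder : ∀ v ∈ Icc s u, HasDerivWithinAt ψ (V (ψ v)) (Icc s u) v :=
        fun v hv => (hψ v (hIoo' hv)).hasDerivWithinAt
      have hbound : ∀ v ∈ Ico s u, ‖V (ψ v)‖ ≤ M :=
        fun v hv => hM _ (hK' v ⟨hv.1, hv.2.le⟩)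
      have hseg := norm_image_sub_le_of_norm_deriv_le_segment' hder hbound u
        ⟨hus.le, le_refl u⟩
      refine ⟨u, ?_, hus, min_le_left _ _⟩
      have htri : ‖ψ u - x‖ ≤ ‖ψ u - ψ s‖ + ‖ψ s - x‖ := norm_sub_le_norm_sub_add_norm_sub _ _ _
      show ‖ψ u - x‖ ≤ M * u
      calc ‖ψ u - x‖ ≤ M * (u - s) + M * s := by linarith [hsS', hseg, htri]
        _ = M * u := by ring
  -- trajectory in ball
  have hK : ∀ s ∈ Icc 0 t, ψ s ∈ closedBall X₀ r := by
    intro s hs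
    rw [mem_closedBall, dist_eq_norm]
    have h1 : ‖ψ s - x‖ ≤ M * s := key hs
    have h2 : ‖x - X₀‖ ≤ r / 2 := by rw [← dist_eq_norm]; exact mem_closedBall.1 hx
    have h3 : M * s ≤ M * t := by nlinarith [hs.1, hs.2]
    calc ‖ψ s - X₀‖ ≤ ‖ψ s - x‖ + ‖x - X₀‖ := norm_sub_le_norm_sub_add_norm_sub _ _ _
      _ ≤ r := by nlinarith
  have h1 : ‖ψ t - x‖ ≤ M * t := key ⟨ht0, le_refl t⟩
  -- step 2, pointwise
  have hquad : ∀ s ∈ Icc 0 t, ‖ψ s - x - s • V x‖ ≤ L * M * t * s := by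
    have hder : ∀ s ∈ Icc 0 t,
        HasDerivWithinAt (fun s => ψ s - s • V x) (V (ψ s) - V x) (Icc 0 t) s := by
      intro s hs
      have hlin : HasDerivAt (fun s : ℝ => s • V x) (V x) s := by
        simpa using (hasDerivAt_id s).smul_const (V x)
      exact ((hψ s (hIcc hs)).sub hlin).hasDerivWithinAt
    have hbound : ∀ s ∈ Ico 0 t, ‖V (ψ s) - V x‖ ≤ L * M * t := by
      intro s hs
      have hlip := hL _ (hK s ⟨hs.1, hs.2.le⟩) x hxK
      have h2 : ‖ψ s - x‖ ≤ M * s := key ⟨hs.1, hs.2.le⟩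
      have h3 : ‖ψ s - x‖ ≤ M * t := h2.trans (mul_le_mul_of_nonneg_left hs.2.le hM0)
      calc ‖V (ψ s) - V x‖ ≤ L * ‖ψ s - x‖ := hlip
        _ ≤ L * (M * t) := mul_le_mul_of_nonneg_left h3 hL0
        _ = L * M * t := by ring
    intro s hs
    have hseg := norm_image_sub_le_of_norm_deriv_le_segment' hder hbound s hs
    rw [hψ0, zero_smul, sub_zero] at hseg
    calc ‖ψ s - x - s • V x‖ = ‖ψ s - s • V x - x‖ := by rw [sub_right_comm]
      _ ≤ L * M * t * (s - 0) := hseg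
      _ = L * M * t * s := by ring
  have h2 : ‖ψ t - x - t • V x‖ ≤ L * M * t ^ 2 := by
    have := hquad t ⟨ht0, le_refl t⟩
    nlinarith [this]
  -- step 3
  set w := fderiv ℝ V x (V x) with hw
  have h3 : ‖ψ t - x - t • V x - (t ^ 2 / 2) • w‖ ≤ (L2 * M ^ 2 + L ^ 2 * M) * t ^ 3 := by
    have hder : ∀ s ∈ Icc 0 t,
        HasDerivWithinAt (fun s => ψ s - s • V x - (s ^ 2 / 2) • w)
          (V (ψ s) - V x - s • w) (Icc 0 t) s := by
      intro s hs
      have ha : HasDerivAt (fun s : ℝ => (s ^ 2 / 2) • w) (s • w) s := by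
        have h := (((hasDerivAt_pow 2 s).div_const 2).smul_const w)
        convert h using 1
        congr 1
        push_cast
        ring
      have hlin : HasDerivAt (fun s : ℝ => s • V x) (V x) s := by
        simpa using (hasDerivAt_id s).smul_const (V x)
      exact (((hψ s (hIcc hs)).sub hlin).sub ha).hasDerivWithinAt
    have hbound : ∀ s ∈ Ico 0 t,
        ‖V (ψ s) - V x - s • w‖ ≤ (L2 * M ^ 2 + L ^ 2 * M) * t ^ 2 := by
      intro s hs
      have hsIcc : s ∈ Icc 0 t := ⟨hs.1, hs.2.le⟩
      have hKs := hK s hsIcc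
      have htaylor : ‖V (ψ s) - V x - fderiv ℝ V x (ψ s - x)‖ ≤ L2 * ‖ψ s - x‖ ^ 2 :=
        taylor_quad hV hL20 hL2 hxK hKs
      have h4 : fderiv ℝ V x (ψ s - x - s • V x) = fderiv ℝ V x (ψ s - x) - s • w := by
        rw [map_sub, map_smul, hw]
      have hsplit : V (ψ s) - V x - s • w
          = (V (ψ s) - V x - fderiv ℝ V x (ψ s - x)) + fderiv ℝ V x (ψ s - x - s • V x) := by
        rw [h4]; abel
      have hop : ‖fderiv ℝ V x (ψ s - x - s • V x)‖ ≤ L * (L * M * t * s) := by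
        calc ‖fderiv ℝ V x (ψ s - x - s • V x)‖
            ≤ ‖fderiv ℝ V x‖ * ‖ψ s - x - s • V x‖ := (fderiv ℝ V x).le_opNorm _
          _ ≤ L * (L * M * t * s) := by
              apply mul_le_mul (hLop x hxK) (hquad s hsIcc) (norm_nonneg _) hL0
      have hn : ‖ψ s - x‖ ≤ M * s := key hsIcc
      calc ‖V (ψ s) - V x - s • w‖
          ≤ ‖V (ψ s) - V x - fderiv ℝ V x (ψ s - x)‖
            + ‖fderiv ℝ V x (ψ s - x - s • V x)‖ := by rw [hsplit]; exact norm_add_le _ _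
        _ ≤ L2 * ‖ψ s - x‖ ^ 2 + L * (L * M * t * s) := add_le_add htaylor hop
        _ ≤ L2 * (M * t) ^ 2 + L * (L * M * t * t) := by
            have hnt : ‖ψ s - x‖ ≤ M * t :=
              hn.trans (mul_le_mul_of_nonneg_left hs.2.le hM0)
            have e1 : L2 * ‖ψ s - x‖ ^ 2 ≤ L2 * (M * t) ^ 2 :=
              mul_le_mul_of_nonneg_left (by nlinarith [norm_nonneg (ψ s - x)]) hL20
            have e2 : L * (L * M * t * s) ≤ L * (L * M * t * t) := by
              refine mul_le_mul_of_nonneg_left ?_ hL0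
              exact mul_le_mul_of_nonneg_left hs.2.le
                (mul_nonneg (mul_nonneg hL0 hM0) ht0)
            linarith
        _ = (L2 * M ^ 2 + L ^ 2 * M) * t ^ 2 := by ring
    have hseg := norm_image_sub_le_of_norm_deriv_le_segment' hder hbound t ⟨ht0, le_refl t⟩
    have h0 : ψ 0 - (0:ℝ) • V x - ((0:ℝ) ^ 2 / 2) • w = x := by simp [hψ0]
    rw [h0] at hseg
    calc ‖ψ t - x - t • V x - (t ^ 2 / 2) • w‖
        = ‖ψ t - t • V x - (t ^ 2 / 2) • w - x‖ := by congr 1; abel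
      _ ≤ (L2 * M ^ 2 + L ^ 2 * M) * t ^ 2 * (t - 0) := hseg
      _ = (L2 * M ^ 2 + L ^ 2 * M) * t ^ 3 := by ring
  exact ⟨h1, h2, h3⟩
lemma flow_step {V : E → E} (hV : Differentiable ℝ V)
    {X₀ : E} {r M L L2 : ℝ} (hM0 : 0 ≤ M) (hL0 : 0 ≤ L) (hL20 : 0 ≤ L2)
    (hM : ∀ y ∈ closedBall X₀ r, ‖V y‖ ≤ M)
    (hL : ∀ y ∈ closedBall X₀ r, ∀ z ∈ closedBall X₀ r, ‖V y - V z‖ ≤ L * ‖y - z‖)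
    (hL2 : ∀ y ∈ closedBall X₀ r, ∀ z ∈ closedBall X₀ r,
      ‖fderiv ℝ V y - fderiv ℝ V z‖ ≤ L2 * ‖y - z‖)
    (hLop : ∀ y ∈ closedBall X₀ r, ‖fderiv ℝ V y‖ ≤ L)
    {x : E} (hx : x ∈ closedBall X₀ (r / 2))
    {ε : ℝ} {ψ : ℝ → E} (hψ0 : ψ 0 = x)
    (hψ : ∀ s ∈ Ioo (-ε) ε, HasDerivAt ψ (V (ψ s)) s)
    {t : ℝ} (htε : |t| < ε) (htr : |t| * (M + 1) ≤ r / 2) :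
    ‖ψ t - x‖ ≤ M * |t| ∧
    ‖ψ t - x - t • V x‖ ≤ L * M * |t| ^ 2 ∧
    ‖ψ t - x - t • V x - (t ^ 2 / 2) • fderiv ℝ V x (V x)‖
      ≤ (L2 * M ^ 2 + L ^ 2 * M) * |t| ^ 3 := by
  rcases le_or_gt 0 t with ht0 | ht0
  · rw [abs_of_nonneg ht0] at htε htr ⊢
    exact flow_step_nonneg hV hM0 hL0 hL20 hM hL hL2 hLop hx hψ0 hψ ht0 htε htr
  · rw [abs_of_neg ht0] at htε htr ⊢
    set V' : E → E := fun y => -V y with hV'def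
    have hfd : ∀ z : E, fderiv ℝ V' z = -fderiv ℝ V z := fun z => fderiv_neg
    have hψ' : ∀ s ∈ Ioo (-ε) ε, HasDerivAt (fun u => ψ (-u)) (V' ((fun u => ψ (-u)) s)) s := by
      intro s hs
      have hms : -s ∈ Ioo (-ε) ε := ⟨by linarith [hs.2], by linarith [hs.1]⟩
      have h := (hψ (-s) hms).scomp s (hasDerivAt_neg s)
      simpa [hV'def, neg_one_smul, Function.comp_def] using h
    have hc := flow_step_nonneg (V := V') (X₀ := X₀) (r := r) (hV.neg)
      hM0 hL0 hL20
      (fun y hy => by simpa [hV'def] using hM y hy)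
      (fun y hy z hz => by
        have h := hL y hy z hz
        calc ‖V' y - V' z‖ = ‖-(V y - V z)‖ := by rw [hV'def]; congr 1; beta_reduce; rw [neg_sub, sub_neg_eq_add, neg_add_eq_sub]
          _ = ‖V y - V z‖ := norm_neg _
          _ ≤ L * ‖y - z‖ := h
        )
      (fun y hy z hz => by
        have h := hL2 y hy z hz
        calc ‖fderiv ℝ V' y - fderiv ℝ V' z‖
            = ‖-(fderiv ℝ V y - fderiv ℝ V z)‖ := by rw [hfd, hfd]; congr 1; abel
          _ = ‖fderiv ℝ V y - fderiv ℝ V z‖ := norm_neg _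
          _ ≤ L2 * ‖y - z‖ := h
        )
      (fun y hy => by rw [hfd, norm_neg]; exact hLop y hy)
      hx (by simpa using hψ0) hψ'
      (t := -t) (by linarith) htε htr
    obtain ⟨c1, c2, c3⟩ := hc
    simp only [neg_neg] at c1 c2 c3
    refine ⟨c1, ?_, ?_⟩
    · have he : ψ t - x - (-t) • V' x = ψ t - x - t • V x := by
        simp [hV'def, neg_smul, smul_neg]
      rwa [he] at c2
    · have he2 : ψ t - x - (-t) • V' x - ((-t) ^ 2 / 2) • fderiv ℝ V' x (V' x)
          = ψ t - x - t • V x - (t ^ 2 / 2) • fderiv ℝ V x (V x) := by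
        rw [hfd]
        simp [hV'def, neg_smul, smul_neg, neg_neg, neg_sq]
      rwa [he2] at c3

lemma norm_add4_le (p q u v : E) : ‖p + q + u + v‖ ≤ ‖p‖ + ‖q‖ + ‖u‖ + ‖v‖ := by
  calc ‖p + q + u + v‖ ≤ ‖p + q + u‖ + ‖v‖ := norm_add_le _ _
    _ ≤ ‖p + q‖ + ‖u‖ + ‖v‖ := by linarith [norm_add_le (p + q) u]
    _ ≤ ‖p‖ + ‖q‖ + ‖u‖ + ‖v‖ := by linarith [norm_add_le p q]

/-- First-order approximation of `V y` when `y = X₀ + t•w + O(t²)`. -/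
lemma field_lin_approx {V : E → E} (hV : Differentiable ℝ V) {X₀ : E} {r L L2 M' c : ℝ}
    (hL20 : 0 ≤ L2) (hL0 : 0 ≤ L)
    (hLipD : ∀ y ∈ closedBall X₀ r, ∀ z ∈ closedBall X₀ r,
      ‖fderiv ℝ V y - fderiv ℝ V z‖ ≤ L2 * ‖y - z‖)
    (hLop : ‖fderiv ℝ V X₀‖ ≤ L)
    (hX₀ : X₀ ∈ closedBall X₀ r) {y : E} (hy : y ∈ closedBall X₀ r)
    {t : ℝ} {w : E} (hd : ‖y - X₀‖ ≤ M' * |t|) (hM'0 : 0 ≤ M')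
    (hlin : ‖y - X₀ - t • w‖ ≤ c * |t| ^ 2) :
    ‖V y - V X₀ - t • (fderiv ℝ V X₀ w)‖ ≤ (L2 * M' ^ 2 + L * c) * |t| ^ 2 := by
  have tq : ‖V y - V X₀ - fderiv ℝ V X₀ (y - X₀)‖ ≤ L2 * ‖y - X₀‖ ^ 2 :=
    taylor_quad hV hL20 hLipD hX₀ hy
  have hid : fderiv ℝ V X₀ (y - X₀ - t • w)
      = fderiv ℝ V X₀ (y - X₀) - t • fderiv ℝ V X₀ w := by
    rw [map_sub, map_smul]
  have hsplit : V y - V X₀ - t • (fderiv ℝ V X₀ w)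
      = (V y - V X₀ - fderiv ℝ V X₀ (y - X₀)) + fderiv ℝ V X₀ (y - X₀ - t • w) := by
    rw [hid]; abel
  have hop : ‖fderiv ℝ V X₀ (y - X₀ - t • w)‖ ≤ L * (c * |t| ^ 2) := by
    calc ‖fderiv ℝ V X₀ (y - X₀ - t • w)‖ ≤ ‖fderiv ℝ V X₀‖ * ‖y - X₀ - t • w‖ :=
          (fderiv ℝ V X₀).le_opNorm _
      _ ≤ L * (c * |t| ^ 2) :=
          mul_le_mul hLop hlin (norm_nonneg _) hL0
  have hq : L2 * ‖y - X₀‖ ^ 2 ≤ L2 * M' ^ 2 * |t| ^ 2 := by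
    have h2 : ‖y - X₀‖ ^ 2 ≤ (M' * |t|) ^ 2 := by
      nlinarith [norm_nonneg (y - X₀), abs_nonneg t]
    nlinarith
  calc ‖V y - V X₀ - t • (fderiv ℝ V X₀ w)‖
      ≤ ‖V y - V X₀ - fderiv ℝ V X₀ (y - X₀)‖ + ‖fderiv ℝ V X₀ (y - X₀ - t • w)‖ := by
        rw [hsplit]; exact norm_add_le _ _
    _ ≤ L2 * M' ^ 2 * |t| ^ 2 + L * (c * |t| ^ 2) := by linarith [tq.trans hq]
    _ = (L2 * M' ^ 2 + L * c) * |t| ^ 2 := by ring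

/-- Drift of the second-order coefficient `DV(y)·V(y)` away from `DV(X₀)·V(X₀)`. -/
lemma coeff_drift {V : E → E} {X₀ : E} {r L L2 M M' : ℝ}
    (hL20 : 0 ≤ L2) (hL0 : 0 ≤ L) (hM0 : 0 ≤ M) (hM'0 : 0 ≤ M')
    (hM : ∀ y ∈ closedBall X₀ r, ‖V y‖ ≤ M)
    (hLip : ∀ y ∈ closedBall X₀ r, ∀ z ∈ closedBall X₀ r, ‖V y - V z‖ ≤ L * ‖y - z‖)
    (hLipD : ∀ y ∈ closedBall X₀ r, ∀ z ∈ closedBall X₀ r,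
      ‖fderiv ℝ V y - fderiv ℝ V z‖ ≤ L2 * ‖y - z‖)
    (hLop : ‖fderiv ℝ V X₀‖ ≤ L)
    (hX₀ : X₀ ∈ closedBall X₀ r) {y : E} (hy : y ∈ closedBall X₀ r)
    {t : ℝ} (hd : ‖y - X₀‖ ≤ M' * |t|) :
    ‖fderiv ℝ V y (V y) - fderiv ℝ V X₀ (V X₀)‖
      ≤ (L2 * M' * M + L * (L * M')) * |t| := by
  have hsplit : fderiv ℝ V y (V y) - fderiv ℝ V X₀ (V X₀)
      = (fderiv ℝ V y - fderiv ℝ V X₀) (V y) + fderiv ℝ V X₀ (V y - V X₀) := by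
    rw [map_sub, ContinuousLinearMap.sub_apply]; abel
  have h1 : ‖(fderiv ℝ V y - fderiv ℝ V X₀) (V y)‖ ≤ L2 * M' * M * |t| := by
    calc ‖(fderiv ℝ V y - fderiv ℝ V X₀) (V y)‖
        ≤ ‖fderiv ℝ V y - fderiv ℝ V X₀‖ * ‖V y‖ :=
          (fderiv ℝ V y - fderiv ℝ V X₀).le_opNorm _
      _ ≤ (L2 * (M' * |t|)) * M := by
          apply mul_le_mul _ (hM y hy) (norm_nonneg _)
            (mul_nonneg hL20 (mul_nonneg hM'0 (abs_nonneg t)))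
          exact (hLipD y hy X₀ hX₀).trans (mul_le_mul_of_nonneg_left hd hL20)
      _ = L2 * M' * M * |t| := by ring
  have h2 : ‖fderiv ℝ V X₀ (V y - V X₀)‖ ≤ L * (L * M') * |t| := by
    calc ‖fderiv ℝ V X₀ (V y - V X₀)‖ ≤ ‖fderiv ℝ V X₀‖ * ‖V y - V X₀‖ :=
          (fderiv ℝ V X₀).le_opNorm _
      _ ≤ L * (L * (M' * |t|)) := by
          apply mul_le_mul hLop _ (norm_nonneg _) hL0
          exact (hLip y hy X₀ hX₀).trans (mul_le_mul_of_nonneg_left hd hL0)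
      _ = L * (L * M') * |t| := by ring
  calc ‖fderiv ℝ V y (V y) - fderiv ℝ V X₀ (V X₀)‖
      ≤ ‖(fderiv ℝ V y - fderiv ℝ V X₀) (V y)‖ + ‖fderiv ℝ V X₀ (V y - V X₀)‖ := by
        rw [hsplit]; exact norm_add_le _ _
    _ ≤ (L2 * M' * M + L * (L * M')) * |t| := by linarith

set_option maxHeartbeats 1600000 in
/-- Second-order expansion of the commutator of two flows: for `C²` vector fields
`F, G` on `ℝ^d` with flow maps `φ^F, φ^G`, the composition
`Θ(t) = φ^G_{−t} ∘ φ^F_{−t} ∘ φ^G_t ∘ φ^F_t (X₀)` satisfies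
`Θ(t) = X₀ + t² [F, G](X₀) + O(|t|³)`, where
`[F, G](x) = DG(x)·F(x) − DF(x)·G(x)`. -/
theorem flow_commutator_lieBracket_expansion
    {d : ℕ} (F G : EuclideanSpace ℝ (Fin d) → EuclideanSpace ℝ (Fin d))
    (hF : ContDiff ℝ 2 F) (hG : ContDiff ℝ 2 G)
    (X₀ : EuclideanSpace ℝ (Fin d))
    (U : Set (EuclideanSpace ℝ (Fin d))) (hU : U ∈ nhds X₀)
    (ε : ℝ) (hε : 0 < ε)
    (φF φG : ℝ → EuclideanSpace ℝ (Fin d) → EuclideanSpace ℝ (Fin d))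
    (hφF0 : ∀ x ∈ U, φF 0 x = x)
    (hφG0 : ∀ x ∈ U, φG 0 x = x)
    (hφF : ∀ x ∈ U, ∀ t ∈ Set.Ioo (-ε) ε,
      HasDerivAt (fun s => φF s x) (F (φF t x)) t)
    (hφG : ∀ x ∈ U, ∀ t ∈ Set.Ioo (-ε) ε,
      HasDerivAt (fun s => φG s x) (G (φG t x)) t)
    (δ : ℝ) (hδ : 0 < δ) (hδε : δ ≤ ε)
    (hmem : ∀ t : ℝ, |t| < δ → X₀ ∈ U ∧ φF t X₀ ∈ U ∧ φG t (φF t X₀) ∈ U ∧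
      φF (-t) (φG t (φF t X₀)) ∈ U) :
    ∃ C > 0, ∃ ε' > 0, ∀ t : ℝ, |t| < ε' →
      ‖φG (-t) (φF (-t) (φG t (φF t X₀))) - X₀ -
          (t ^ 2) • (fderiv ℝ G X₀ (F X₀) - fderiv ℝ F X₀ (G X₀))‖
        ≤ C * |t| ^ 3 := by
  obtain ⟨r, hr0, hrU⟩ := Metric.nhds_basis_closedBall.mem_iff.1 hU
  have hKcp : IsCompact (closedBall X₀ r) := isCompact_closedBall X₀ r
  have hFd : Differentiable ℝ F := hF.differentiable (by norm_num)
  have hGd : Differentiable ℝ G := hG.differentiable (by norm_num)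
  have hFC1 : ContDiff ℝ 1 (fderiv ℝ F) := hF.fderiv_right (by norm_num)
  have hGC1 : ContDiff ℝ 1 (fderiv ℝ G) := hG.fderiv_right (by norm_num)
  have hFC0 : Continuous (fderiv ℝ (fderiv ℝ F)) :=
    contDiff_zero.mp (hFC1.fderiv_right (by norm_num))
  have hGC0 : Continuous (fderiv ℝ (fderiv ℝ G)) :=
    contDiff_zero.mp (hGC1.fderiv_right (by norm_num))
  obtain ⟨M₁, hM₁⟩ := hKcp.exists_bound_of_continuousOn hF.continuous.continuousOn
  obtain ⟨M₂, hM₂⟩ := hKcp.exists_bound_of_continuousOn hG.continuous.continuousOn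
  obtain ⟨L₁, hL₁⟩ := hKcp.exists_bound_of_continuousOn hFC1.continuous.continuousOn
  obtain ⟨L₂, hL₂⟩ := hKcp.exists_bound_of_continuousOn hGC1.continuous.continuousOn
  obtain ⟨N₁, hN₁⟩ := hKcp.exists_bound_of_continuousOn (f := fderiv ℝ (fderiv ℝ F)) (by exact hFC0.continuousOn)
  obtain ⟨N₂, hN₂⟩ := hKcp.exists_bound_of_continuousOn (f := fderiv ℝ (fderiv ℝ G)) (by exact hGC0.continuousOn)
  set M : ℝ := max 1 (max M₁ M₂) with hMdef
  set L : ℝ := max 1 (max L₁ L₂) with hLdef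
  set L2 : ℝ := max 1 (max N₁ N₂) with hL2def
  have hM0 : (0:ℝ) ≤ M := le_trans zero_le_one (le_max_left _ _)
  have hL0 : (0:ℝ) ≤ L := le_trans zero_le_one (le_max_left _ _)
  have hL20 : (0:ℝ) ≤ L2 := le_trans zero_le_one (le_max_left _ _)
  have hMF : ∀ y ∈ closedBall X₀ r, ‖F y‖ ≤ M :=
    fun y hy => (hM₁ y hy).trans ((le_max_left _ _).trans (le_max_right _ _))
  have hMG : ∀ y ∈ closedBall X₀ r, ‖G y‖ ≤ M :=
    fun y hy => (hM₂ y hy).trans ((le_max_right _ _).trans (le_max_right _ _))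
  have hLopF : ∀ y ∈ closedBall X₀ r, ‖fderiv ℝ F y‖ ≤ L :=
    fun y hy => (hL₁ y hy).trans ((le_max_left _ _).trans (le_max_right _ _))
  have hLopG : ∀ y ∈ closedBall X₀ r, ‖fderiv ℝ G y‖ ≤ L :=
    fun y hy => (hL₂ y hy).trans ((le_max_right _ _).trans (le_max_right _ _))
  have hNF : ∀ y ∈ closedBall X₀ r, ‖fderiv ℝ (fderiv ℝ F) y‖ ≤ L2 :=
    fun y hy => (hN₁ y hy).trans ((le_max_left _ _).trans (le_max_right _ _))
  have hNG : ∀ y ∈ closedBall X₀ r, ‖fderiv ℝ (fderiv ℝ G) y‖ ≤ L2 :=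
    fun y hy => (hN₂ y hy).trans ((le_max_right _ _).trans (le_max_right _ _))
  have hcvx : Convex ℝ (closedBall X₀ r) := convex_closedBall X₀ r
  have hLipF : ∀ y ∈ closedBall X₀ r, ∀ z ∈ closedBall X₀ r, ‖F y - F z‖ ≤ L * ‖y - z‖ :=
    fun y hy z hz => hcvx.norm_image_sub_le_of_norm_fderiv_le
      (fun w _ => hFd w) hLopF hz hy
  have hLipG : ∀ y ∈ closedBall X₀ r, ∀ z ∈ closedBall X₀ r, ‖G y - G z‖ ≤ L * ‖y - z‖ :=
    fun y hy z hz => hcvx.norm_image_sub_le_of_norm_fderiv_le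
      (fun w _ => hGd w) hLopG hz hy
  have hLipDF : ∀ y ∈ closedBall X₀ r, ∀ z ∈ closedBall X₀ r,
      ‖fderiv ℝ F y - fderiv ℝ F z‖ ≤ L2 * ‖y - z‖ :=
    fun y hy z hz => hcvx.norm_image_sub_le_of_norm_fderiv_le
      (fun w _ => (hFC1.differentiable one_ne_zero) w) hNF hz hy
  have hLipDG : ∀ y ∈ closedBall X₀ r, ∀ z ∈ closedBall X₀ r,
      ‖fderiv ℝ G y - fderiv ℝ G z‖ ≤ L2 * ‖y - z‖ :=
    fun y hy z hz => hcvx.norm_image_sub_le_of_norm_fderiv_le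
      (fun w _ => (hGC1.differentiable one_ne_zero) w) hNG hz hy
  -- notation for the data at the base point
  set a : EuclideanSpace ℝ (Fin d) := F X₀ with hadef
  set b : EuclideanSpace ℝ (Fin d) := G X₀ with hbdef
  set A := fderiv ℝ F X₀ with hAdef
  set B := fderiv ℝ G X₀ with hBdef
  have hX₀K : X₀ ∈ closedBall X₀ r := mem_closedBall_self hr0.le
  have hna : ‖a‖ ≤ M := hMF X₀ hX₀K
  have hnb : ‖b‖ ≤ M := hMG X₀ hX₀K
  have hnA : ‖A‖ ≤ L := hLopF X₀ hX₀K
  have hnB : ‖B‖ ≤ L := hLopG X₀ hX₀K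
  have hnP : ‖A a‖ ≤ L * M :=
    ((A).le_opNorm a).trans (mul_le_mul hnA hna (norm_nonneg _) hL0)
  have hnQ : ‖B b‖ ≤ L * M :=
    ((B).le_opNorm b).trans (mul_le_mul hnB hnb (norm_nonneg _) hL0)
  have hnBa : ‖B a‖ ≤ L * M :=
    ((B).le_opNorm a).trans (mul_le_mul hnB hna (norm_nonneg _) hL0)
  have hnAb : ‖A b‖ ≤ L * M :=
    ((A).le_opNorm b).trans (mul_le_mul hnA hnb (norm_nonneg _) hL0)
  -- all the constants
  set CV : ℝ := L2 * M ^ 2 + L ^ 2 * M with hCV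
  have hCV0 : 0 ≤ CV := by
    rw [hCV]
    exact add_nonneg (mul_nonneg hL20 (sq_nonneg M)) (mul_nonneg (sq_nonneg L) hM0)
  have hC20 : 0 ≤ L * M := mul_nonneg hL0 hM0
  set cG1 : ℝ := L2 * M ^ 2 + L * (L * M) with hcG1
  set CW1 : ℝ := L2 * M * M + L * (L * M) with hCW1
  set K2 : ℝ := CV + CV + cG1 + CW1 / 2 with hK2
  set c2' : ℝ := K2 + 2 * (L * M) with hc2'
  set cF2 : ℝ := L2 * (2 * M) ^ 2 + L * c2' with hcF2
  set cP2 : ℝ := L2 * (2 * M) * M + L * (L * (2 * M)) with hcP2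
  set K3 : ℝ := CV + K2 + cF2 + cP2 / 2 with hK3
  set c3' : ℝ := K3 + 3 * (L * M) with hc3'
  set cG3 : ℝ := L2 * (3 * M) ^ 2 + L * c3' with hcG3
  set cQ3 : ℝ := L2 * (3 * M) * M + L * (L * (3 * M)) with hcQ3
  set K4 : ℝ := CV + K3 + cG3 + cQ3 / 2 with hK4
  have hLM0 : 0 ≤ L * M := mul_nonneg hL0 hM0
  have hcG10 : 0 ≤ cG1 := by
    rw [hcG1]
    exact add_nonneg (mul_nonneg hL20 (sq_nonneg M)) (mul_nonneg hL0 hC20)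
  have hCW10 : 0 ≤ CW1 := by
    rw [hCW1]
    exact add_nonneg (mul_nonneg (mul_nonneg hL20 hM0) hM0) (mul_nonneg hL0 hLM0)
  have hK20 : 0 ≤ K2 := by rw [hK2]; linarith
  have hc2'0 : 0 ≤ c2' := by rw [hc2']; linarith
  have h2M0 : (0:ℝ) ≤ 2 * M := by linarith
  have h3M0 : (0:ℝ) ≤ 3 * M := by linarith
  have hcF20 : 0 ≤ cF2 := by
    rw [hcF2]
    exact add_nonneg (mul_nonneg hL20 (sq_nonneg (2 * M))) (mul_nonneg hL0 hc2'0)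
  have hcP20 : 0 ≤ cP2 := by
    rw [hcP2]
    exact add_nonneg (mul_nonneg (mul_nonneg hL20 h2M0) hM0)
      (mul_nonneg hL0 (mul_nonneg hL0 h2M0))
  have hK30 : 0 ≤ K3 := by rw [hK3]; linarith
  have hc3'0 : 0 ≤ c3' := by rw [hc3']; linarith
  have hcG30 : 0 ≤ cG3 := by
    rw [hcG3]
    exact add_nonneg (mul_nonneg hL20 (sq_nonneg (3 * M))) (mul_nonneg hL0 hc3'0)
  have hcQ30 : 0 ≤ cQ3 := by
    rw [hcQ3]
    exact add_nonneg (mul_nonneg (mul_nonneg hL20 h3M0) hM0)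
      (mul_nonneg hL0 (mul_nonneg hL0 h3M0))
  have hK40 : 0 ≤ K4 := by rw [hK4]; linarith
  refine ⟨K4 + 1, by linarith, min δ (min 1 (r / (8 * (M + 1)))), ?_, ?_⟩
  · have : 0 < r / (8 * (M + 1)) := by positivity
    exact lt_min hδ (lt_min one_pos this)
  intro t ht
  have htδ : |t| < δ := lt_of_lt_of_le ht (min_le_left _ _)
  have ht1 : |t| ≤ 1 := le_of_lt (lt_of_lt_of_le ht ((min_le_right _ _).trans (min_le_left _ _)))
  have htr8 : |t| * (M + 1) ≤ r / 8 := by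
    have h1 : |t| ≤ r / (8 * (M + 1)) :=
      le_of_lt (lt_of_lt_of_le ht ((min_le_right _ _).trans (min_le_right _ _)))
    have hMp : 0 < M + 1 := by linarith
    calc |t| * (M + 1) ≤ r / (8 * (M + 1)) * (M + 1) :=
          mul_le_mul_of_nonneg_right h1 hMp.le
      _ = r / 8 := by
          rw [← div_div]
          exact div_mul_cancel₀ _ (ne_of_gt hMp)
  have htr2 : |t| * (M + 1) ≤ r / 2 := by linarith
  have htε : |t| < ε := lt_of_lt_of_le htδ hδε
  obtain ⟨hU0, hU1, hU2, hU3⟩ := hmem t htδ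
  set x₁ := φF t X₀ with hx₁def
  set x₂ := φG t x₁ with hx₂def
  set x₃ := φF (-t) x₂ with hx₃def
  set x₄ := φG (-t) x₃ with hx₄def
  have hhalf : closedBall X₀ (r / 2) ⊆ closedBall X₀ r :=
    closedBall_subset_closedBall (by linarith)
  have hX₀half : X₀ ∈ closedBall X₀ (r / 2) := mem_closedBall_self (by linarith)
  -- stage 1
  obtain ⟨d1, f1, e1⟩ := flow_step hFd hM0 hL0 hL20 hMF hLipF hLipDF hLopF hX₀half
    (hφF0 X₀ hU0) (fun s hs => hφF X₀ hU0 s hs) htε htr2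
  have hd1 : ‖x₁ - X₀‖ ≤ M * |t| := d1
  have hx₁half : x₁ ∈ closedBall X₀ (r / 2) := by
    rw [mem_closedBall, dist_eq_norm]
    calc ‖x₁ - X₀‖ ≤ M * |t| := hd1
      _ ≤ (M + 1) * |t| :=
          mul_le_mul_of_nonneg_right (by linarith) (abs_nonneg t)
      _ ≤ r / 2 := by rw [mul_comm]; linarith
  have hx₁K : x₁ ∈ closedBall X₀ r := hhalf hx₁half
  -- stage 2
  obtain ⟨d2, f2, e2⟩ := flow_step hGd hM0 hL0 hL20 hMG hLipG hLipDG hLopG hx₁half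
    (hφG0 x₁ hU1) (fun s hs => hφG x₁ hU1 s hs) htε htr2
  have hd2 : ‖x₂ - x₁‖ ≤ M * |t| := d2
  have hdx₂ : ‖x₂ - X₀‖ ≤ 2 * M * |t| := by
    calc ‖x₂ - X₀‖ ≤ ‖x₂ - x₁‖ + ‖x₁ - X₀‖ := norm_sub_le_norm_sub_add_norm_sub _ _ _
      _ ≤ 2 * M * |t| := by linarith
  have hx₂half : x₂ ∈ closedBall X₀ (r / 2) := by
    rw [mem_closedBall, dist_eq_norm]
    calc ‖x₂ - X₀‖ ≤ 2 * M * |t| := hdx₂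
      _ ≤ 2 * ((M + 1) * |t|) := by
          have h := mul_le_mul_of_nonneg_right (show M ≤ M + 1 by linarith) (abs_nonneg t)
          linarith only [h]
      _ ≤ r / 2 := by rw [mul_comm (M+1)]; linarith
  have hx₂K : x₂ ∈ closedBall X₀ r := hhalf hx₂half
  -- stage 3 (time -t)
  have htε' : |(-t)| < ε := by rwa [abs_neg]
  have htr2' : |(-t)| * (M + 1) ≤ r / 2 := by rwa [abs_neg]
  obtain ⟨d3, f3, e3⟩ := flow_step hFd hM0 hL0 hL20 hMF hLipF hLipDF hLopF hx₂half
    (hφF0 x₂ hU2) (fun s hs => hφF x₂ hU2 s hs) htε' htr2'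
  rw [abs_neg] at d3 f3 e3
  have hd3 : ‖x₃ - x₂‖ ≤ M * |t| := d3
  have hdx₃ : ‖x₃ - X₀‖ ≤ 3 * M * |t| := by
    calc ‖x₃ - X₀‖ ≤ ‖x₃ - x₂‖ + ‖x₂ - X₀‖ := norm_sub_le_norm_sub_add_norm_sub _ _ _
      _ ≤ 3 * M * |t| := by linarith
  have hx₃half : x₃ ∈ closedBall X₀ (r / 2) := by
    rw [mem_closedBall, dist_eq_norm]
    calc ‖x₃ - X₀‖ ≤ 3 * M * |t| := hdx₃
      _ ≤ 3 * ((M + 1) * |t|) := by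
          have h := mul_le_mul_of_nonneg_right (show M ≤ M + 1 by linarith) (abs_nonneg t)
          linarith only [h]
      _ ≤ r / 2 := by rw [mul_comm (M+1)]; linarith
  have hx₃K : x₃ ∈ closedBall X₀ r := hhalf hx₃half
  -- stage 4 (time -t)
  obtain ⟨d4, f4, e4⟩ := flow_step hGd hM0 hL0 hL20 hMG hLipG hLipDG hLopG hx₃half
    (hφG0 x₃ hU3) (fun s hs => hφG x₃ hU3 s hs) htε' htr2'
  rw [abs_neg] at d4 f4 e4
  -- main terms
  set P := A a with hPdef
  set Q := B b with hQdef
  set m₁ := X₀ + t • a + (t ^ 2 / 2) • P with hm₁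
  set m₂ := X₀ + t • (a + b) + (t ^ 2) • (B a) + (t ^ 2 / 2) • (P + Q) with hm₂
  set m₃ := X₀ + t • b + (t ^ 2) • (B a - A b) + (t ^ 2 / 2) • Q with hm₃
  -- stage 1 estimate
  have E1 : ‖x₁ - m₁‖ ≤ CV * |t| ^ 3 := by
    have hidm : x₁ - m₁ = x₁ - X₀ - t • a - (t ^ 2 / 2) • P := by rw [hm₁]; abel
    rw [hidm]; exact e1
  -- approximation of G x₁
  have hGx₁ : ‖G x₁ - b - t • (B a)‖ ≤ cG1 * |t| ^ 2 := by
    have := field_lin_approx hGd hL20 hL0 hLipDG hnB hX₀K hx₁K hd1 hM0 f1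
    rw [hcG1]; exact this
  have hQ₁ : ‖fderiv ℝ G x₁ (G x₁) - Q‖ ≤ CW1 * |t| := by
    have := coeff_drift hL20 hL0 hM0 hM0 hMG hLipG hLipDG hnB hX₀K hx₁K hd1
    rw [hCW1]; exact this
  -- stage 2 estimate
  have E2 : ‖x₂ - m₂‖ ≤ K2 * |t| ^ 3 := by
    have hidm : x₂ - m₂ = (x₂ - x₁ - t • G x₁ - (t ^ 2 / 2) • fderiv ℝ G x₁ (G x₁))
        + (x₁ - m₁) + t • (G x₁ - b - t • (B a))
        + (t ^ 2 / 2) • (fderiv ℝ G x₁ (G x₁) - Q) := by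
      rw [hm₂, hm₁, hQdef]; module
    have n1 : ‖t • (G x₁ - b - t • (B a))‖ ≤ cG1 * |t| ^ 3 := by
      rw [norm_smul, Real.norm_eq_abs]
      calc |t| * ‖G x₁ - b - t • (B a)‖ ≤ |t| * (cG1 * |t| ^ 2) :=
            mul_le_mul_of_nonneg_left hGx₁ (abs_nonneg t)
        _ = cG1 * |t| ^ 3 := by ring
    have n2 : ‖(t ^ 2 / 2) • (fderiv ℝ G x₁ (G x₁) - Q)‖ ≤ CW1 / 2 * |t| ^ 3 := by
      rw [norm_smul, Real.norm_eq_abs, abs_of_nonneg (by positivity : (0:ℝ) ≤ t ^ 2 / 2)]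
      calc t ^ 2 / 2 * ‖fderiv ℝ G x₁ (G x₁) - Q‖ ≤ t ^ 2 / 2 * (CW1 * |t|) :=
            mul_le_mul_of_nonneg_left hQ₁ (by positivity)
        _ = CW1 / 2 * |t| ^ 3 := by rw [← sq_abs t]; ring
    rw [hidm]
    calc ‖_ + _ + _ + _‖ ≤ _ := norm_add4_le _ _ _ _
      _ ≤ CV * |t| ^ 3 + CV * |t| ^ 3 + cG1 * |t| ^ 3 + CW1 / 2 * |t| ^ 3 :=
          add_le_add (add_le_add (add_le_add e2 E1) n1) n2
      _ = K2 * |t| ^ 3 := by rw [hK2]; ring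
  -- first-order control of x₂
  have g2 : ‖x₂ - X₀ - t • (a + b)‖ ≤ c2' * |t| ^ 2 := by
    have hidm : x₂ - X₀ - t • (a + b) = (x₂ - m₂) + (t ^ 2) • (B a)
        + (t ^ 2 / 2) • (P + Q) := by rw [hm₂]; module
    have n1 : ‖(t ^ 2 : ℝ) • (B a)‖ ≤ L * M * |t| ^ 2 := by
      rw [norm_smul, Real.norm_eq_abs, abs_of_nonneg (sq_nonneg t), ← sq_abs t]
      calc |t| ^ 2 * ‖B a‖ ≤ |t| ^ 2 * (L * M) :=
            mul_le_mul_of_nonneg_left hnBa (pow_nonneg (abs_nonneg t) 2)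
        _ = L * M * |t| ^ 2 := by ring
    have n2 : ‖(t ^ 2 / 2 : ℝ) • (P + Q)‖ ≤ L * M * |t| ^ 2 := by
      rw [norm_smul, Real.norm_eq_abs, abs_of_nonneg (by positivity : (0:ℝ) ≤ t ^ 2 / 2)]
      have : ‖P + Q‖ ≤ 2 * (L * M) := by
        calc ‖P + Q‖ ≤ ‖P‖ + ‖Q‖ := norm_add_le _ _
          _ ≤ 2 * (L * M) := by linarith only [hnP, hnQ]
      calc t ^ 2 / 2 * ‖P + Q‖ ≤ t ^ 2 / 2 * (2 * (L * M)) :=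
            mul_le_mul_of_nonneg_left this (by positivity)
        _ = L * M * |t| ^ 2 := by rw [← sq_abs t]; ring
    have hE2' : ‖x₂ - m₂‖ ≤ K2 * |t| ^ 2 := by
      calc ‖x₂ - m₂‖ ≤ K2 * |t| ^ 3 := E2
        _ ≤ K2 * |t| ^ 2 := mul_le_mul_of_nonneg_left
            (pow_le_pow_of_le_one (abs_nonneg t) ht1 (by norm_num)) hK20
    rw [hidm]
    calc ‖_ + _ + _‖ ≤ ‖x₂ - m₂‖ + ‖(t ^ 2 : ℝ) • (B a)‖ + ‖(t ^ 2 / 2 : ℝ) • (P + Q)‖ :=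
          norm_add₃_le
      _ ≤ K2 * |t| ^ 2 + L * M * |t| ^ 2 + L * M * |t| ^ 2 :=
          add_le_add (add_le_add hE2' n1) n2
      _ = c2' * |t| ^ 2 := by rw [hc2']; ring
  -- approximation of F x₂
  have hFx₂ : ‖F x₂ - a - t • (A (a + b))‖ ≤ cF2 * |t| ^ 2 := by
    have h2M : ‖x₂ - X₀‖ ≤ 2 * M * |t| := hdx₂
    have := field_lin_approx hFd hL20 hL0 hLipDF hnA hX₀K hx₂K
      (by rw [show (2:ℝ) * M * |t| = 2 * M * |t| from rfl] at h2M; exact h2M)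
      (by positivity : (0:ℝ) ≤ 2 * M) g2
    rw [hcF2]; exact this
  have hP₂ : ‖fderiv ℝ F x₂ (F x₂) - P‖ ≤ cP2 * |t| := by
    have := coeff_drift hL20 hL0 hM0 (by positivity : (0:ℝ) ≤ 2 * M) hMF hLipF hLipDF hnA
      hX₀K hx₂K hdx₂
    rw [hcP2]; exact this
  -- stage 3 estimate
  have e3' : ‖x₃ - x₂ + t • F x₂ - (t ^ 2 / 2) • fderiv ℝ F x₂ (F x₂)‖ ≤ CV * |t| ^ 3 := by
    have hidm : x₃ - x₂ + t • F x₂ - (t ^ 2 / 2) • fderiv ℝ F x₂ (F x₂)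
        = x₃ - x₂ - (-t) • F x₂ - ((-t) ^ 2 / 2) • fderiv ℝ F x₂ (F x₂) := by
      rw [neg_smul, neg_sq]; abel
    rw [hidm]; exact e3
  have E3 : ‖x₃ - m₃‖ ≤ K3 * |t| ^ 3 := by
    have hAab : A (a + b) = P + A b := by rw [map_add, hPdef]
    have hidm : x₃ - m₃ = (x₃ - x₂ + t • F x₂ - (t ^ 2 / 2) • fderiv ℝ F x₂ (F x₂))
        + (x₂ - m₂) - t • (F x₂ - a - t • (A (a + b)))
        + (t ^ 2 / 2) • (fderiv ℝ F x₂ (F x₂) - P) := by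
      rw [hm₃, hm₂, hAab, hQdef, hPdef]; module
    have n1 : ‖t • (F x₂ - a - t • (A (a + b)))‖ ≤ cF2 * |t| ^ 3 := by
      rw [norm_smul, Real.norm_eq_abs]
      calc |t| * ‖F x₂ - a - t • (A (a + b))‖ ≤ |t| * (cF2 * |t| ^ 2) :=
            mul_le_mul_of_nonneg_left hFx₂ (abs_nonneg t)
        _ = cF2 * |t| ^ 3 := by ring
    have n2 : ‖(t ^ 2 / 2) • (fderiv ℝ F x₂ (F x₂) - P)‖ ≤ cP2 / 2 * |t| ^ 3 := by
      rw [norm_smul, Real.norm_eq_abs, abs_of_nonneg (by positivity : (0:ℝ) ≤ t ^ 2 / 2)]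
      calc t ^ 2 / 2 * ‖fderiv ℝ F x₂ (F x₂) - P‖ ≤ t ^ 2 / 2 * (cP2 * |t|) :=
            mul_le_mul_of_nonneg_left hP₂ (by positivity)
        _ = cP2 / 2 * |t| ^ 3 := by rw [← sq_abs t]; ring
    have hidm2 : x₃ - m₃ = (x₃ - x₂ + t • F x₂ - (t ^ 2 / 2) • fderiv ℝ F x₂ (F x₂))
        + (x₂ - m₂) + (- (t • (F x₂ - a - t • (A (a + b)))))
        + (t ^ 2 / 2) • (fderiv ℝ F x₂ (F x₂) - P) := by rw [hidm]; abel
    rw [hidm2]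
    calc ‖_ + _ + _ + _‖ ≤ _ := norm_add4_le _ _ _ _
      _ ≤ CV * |t| ^ 3 + K2 * |t| ^ 3 + cF2 * |t| ^ 3 + cP2 / 2 * |t| ^ 3 :=
          add_le_add (add_le_add (add_le_add e3' E2)
            (by rw [norm_neg]; exact n1)) n2
      _ = K3 * |t| ^ 3 := by rw [hK3]; ring
  -- first-order control of x₃
  have g3 : ‖x₃ - X₀ - t • b‖ ≤ c3' * |t| ^ 2 := by
    have hidm : x₃ - X₀ - t • b = (x₃ - m₃) + (t ^ 2) • (B a - A b)
        + (t ^ 2 / 2) • Q := by rw [hm₃]; module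
    have n1 : ‖(t ^ 2 : ℝ) • (B a - A b)‖ ≤ 2 * (L * M) * |t| ^ 2 := by
      rw [norm_smul, Real.norm_eq_abs, abs_of_nonneg (sq_nonneg t), ← sq_abs t]
      have : ‖B a - A b‖ ≤ 2 * (L * M) := by
        calc ‖B a - A b‖ ≤ ‖B a‖ + ‖A b‖ := norm_sub_le _ _
          _ ≤ 2 * (L * M) := by linarith only [hnBa, hnAb]
      calc |t| ^ 2 * ‖B a - A b‖ ≤ |t| ^ 2 * (2 * (L * M)) :=
            mul_le_mul_of_nonneg_left this (pow_nonneg (abs_nonneg t) 2)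
        _ = 2 * (L * M) * |t| ^ 2 := by ring
    have n2 : ‖(t ^ 2 / 2 : ℝ) • Q‖ ≤ L * M * |t| ^ 2 := by
      rw [norm_smul, Real.norm_eq_abs, abs_of_nonneg (by positivity : (0:ℝ) ≤ t ^ 2 / 2)]
      calc t ^ 2 / 2 * ‖Q‖ ≤ t ^ 2 / 2 * (L * M) := by
            apply mul_le_mul_of_nonneg_left _ (by positivity)
            rw [hQdef]; exact hnQ
        _ ≤ L * M * |t| ^ 2 := by
            rw [← sq_abs t]
            have h := mul_nonneg (mul_nonneg hL0 hM0) (sq_nonneg |t|)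
            linarith only [h]
    have hE3' : ‖x₃ - m₃‖ ≤ K3 * |t| ^ 2 := by
      calc ‖x₃ - m₃‖ ≤ K3 * |t| ^ 3 := E3
        _ ≤ K3 * |t| ^ 2 := mul_le_mul_of_nonneg_left
            (pow_le_pow_of_le_one (abs_nonneg t) ht1 (by norm_num)) hK30
    rw [hidm]
    calc ‖_ + _ + _‖ ≤ ‖x₃ - m₃‖ + ‖(t ^ 2 : ℝ) • (B a - A b)‖ + ‖(t ^ 2 / 2 : ℝ) • Q‖ :=
          norm_add₃_le
      _ ≤ K3 * |t| ^ 2 + 2 * (L * M) * |t| ^ 2 + L * M * |t| ^ 2 :=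
          add_le_add (add_le_add hE3' n1) n2
      _ = c3' * |t| ^ 2 := by rw [hc3']; ring
  -- approximation of G x₃
  have hGx₃ : ‖G x₃ - b - t • (B b)‖ ≤ cG3 * |t| ^ 2 := by
    have := field_lin_approx hGd hL20 hL0 hLipDG hnB hX₀K hx₃K hdx₃
      (by positivity : (0:ℝ) ≤ 3 * M) g3
    rw [hcG3]; exact this
  have hQ₃ : ‖fderiv ℝ G x₃ (G x₃) - Q‖ ≤ cQ3 * |t| := by
    have := coeff_drift hL20 hL0 hM0 (by positivity : (0:ℝ) ≤ 3 * M) hMG hLipG hLipDG hnB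
      hX₀K hx₃K hdx₃
    rw [hcQ3]; exact this
  -- stage 4 estimate
  have e4' : ‖x₄ - x₃ + t • G x₃ - (t ^ 2 / 2) • fderiv ℝ G x₃ (G x₃)‖ ≤ CV * |t| ^ 3 := by
    have hidm : x₄ - x₃ + t • G x₃ - (t ^ 2 / 2) • fderiv ℝ G x₃ (G x₃)
        = x₄ - x₃ - (-t) • G x₃ - ((-t) ^ 2 / 2) • fderiv ℝ G x₃ (G x₃) := by
      rw [neg_smul, neg_sq]; abel
    rw [hidm]; exact e4
  have E4 : ‖x₄ - X₀ - (t ^ 2) • (B a - A b)‖ ≤ K4 * |t| ^ 3 := by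
    have hBbb : B b = Q := by rw [hQdef]
    have hidm : x₄ - X₀ - (t ^ 2) • (B a - A b)
        = (x₄ - x₃ + t • G x₃ - (t ^ 2 / 2) • fderiv ℝ G x₃ (G x₃))
        + (x₃ - m₃) + (- (t • (G x₃ - b - t • (B b))))
        + (t ^ 2 / 2) • (fderiv ℝ G x₃ (G x₃) - Q) := by
      rw [hm₃, hBbb, hQdef]; module
    have n1 : ‖t • (G x₃ - b - t • (B b))‖ ≤ cG3 * |t| ^ 3 := by
      rw [norm_smul, Real.norm_eq_abs]
      calc |t| * ‖G x₃ - b - t • (B b)‖ ≤ |t| * (cG3 * |t| ^ 2) :=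
            mul_le_mul_of_nonneg_left hGx₃ (abs_nonneg t)
        _ = cG3 * |t| ^ 3 := by ring
    have n2 : ‖(t ^ 2 / 2) • (fderiv ℝ G x₃ (G x₃) - Q)‖ ≤ cQ3 / 2 * |t| ^ 3 := by
      rw [norm_smul, Real.norm_eq_abs, abs_of_nonneg (by positivity : (0:ℝ) ≤ t ^ 2 / 2)]
      calc t ^ 2 / 2 * ‖fderiv ℝ G x₃ (G x₃) - Q‖ ≤ t ^ 2 / 2 * (cQ3 * |t|) :=
            mul_le_mul_of_nonneg_left hQ₃ (by positivity)
        _ = cQ3 / 2 * |t| ^ 3 := by rw [← sq_abs t]; ring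
    rw [hidm]
    calc ‖_ + _ + _ + _‖ ≤ _ := norm_add4_le _ _ _ _
      _ ≤ CV * |t| ^ 3 + K3 * |t| ^ 3 + cG3 * |t| ^ 3 + cQ3 / 2 * |t| ^ 3 :=
          add_le_add (add_le_add (add_le_add e4' E3)
            (by rw [norm_neg]; exact n1)) n2
      _ = K4 * |t| ^ 3 := by rw [hK4]; ring
  calc ‖x₄ - X₀ - (t ^ 2) • (B a - A b)‖ ≤ K4 * |t| ^ 3 := E4
    _ ≤ (K4 + 1) * |t| ^ 3 := by
        have h := pow_nonneg (abs_nonneg t) 3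
        linarith only [h]
end

section
/- Let t₁, t₂, t₃, t₄ ∈ ℝ³ be unit vectors with t_i · t_j = −1/3 for all i ≠ j (the directions from the center to the vertices of a regular tetrahedron). Then the six vectors v_{k,l} = (t_l − t_k, t_l × t_k) ∈ ℝ³ × ℝ³ ≅ ℝ⁶, taken over the six pairs (k, l) with 1 ≤ k < l ≤ 4, are linearly independent; equivalently, the 6×6 matrix whose columns are these six vectors has nonzero determinant. -/
open Matrix

private lemma tetra_key (u v w x : Fin 3 → ℝ) :
    ∑ j : Fin 6, Fin.append (v - u) (crossProduct v u) j * Fin.append (x - w) (crossProduct x w) j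
      = (∑ k, v k * x k) - (∑ k, v k * w k) - (∑ k, u k * x k) + (∑ k, u k * w k)
        + (∑ k, v k * x k) * (∑ k, u k * w k) - (∑ k, v k * w k) * (∑ k, u k * x k) := by
  have h0 : ∀ (a b : Fin 3 → ℝ), (Fin.append a b : Fin 6 → ℝ) 0 = a 0 := fun _ _ => rfl
  have h1 : ∀ (a b : Fin 3 → ℝ), (Fin.append a b : Fin 6 → ℝ) 1 = a 1 := fun _ _ => rfl
  have h2 : ∀ (a b : Fin 3 → ℝ), (Fin.append a b : Fin 6 → ℝ) 2 = a 2 := fun _ _ => rfl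
  have h3 : ∀ (a b : Fin 3 → ℝ), (Fin.append a b : Fin 6 → ℝ) 3 = b 0 := fun _ _ => rfl
  have h4 : ∀ (a b : Fin 3 → ℝ), (Fin.append a b : Fin 6 → ℝ) 4 = b 1 := fun _ _ => rfl
  have h5 : ∀ (a b : Fin 3 → ℝ), (Fin.append a b : Fin 6 → ℝ) 5 = b 2 := fun _ _ => rfl
  simp only [Fin.sum_univ_six, Fin.sum_univ_three, h0, h1, h2, h3, h4, h5, cross_apply,
    Pi.sub_apply, Matrix.cons_val_zero, Matrix.cons_val_one, Matrix.head_cons,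
    Matrix.cons_val_two, Matrix.tail_cons]
  ring


private lemma cv0 {α : Type*} (a b c d e f : α) : ![a,b,c,d,e,f] 0 = a := rfl
private lemma cv1 {α : Type*} (a b c d e f : α) : ![a,b,c,d,e,f] 1 = b := rfl
private lemma cv2 {α : Type*} (a b c d e f : α) : ![a,b,c,d,e,f] 2 = c := rfl
private lemma cv3 {α : Type*} (a b c d e f : α) : ![a,b,c,d,e,f] 3 = d := rfl
private lemma cv4 {α : Type*} (a b c d e f : α) : ![a,b,c,d,e,f] 4 = e := rfl
private lemma cv5 {α : Type*} (a b c d e f : α) : ![a,b,c,d,e,f] 5 = f := rfl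
private lemma cvm0 {α : Type*} (a b c d e f : α) (h : 0 < 6) : ![a,b,c,d,e,f] ⟨0,h⟩ = a := rfl
private lemma cvm1 {α : Type*} (a b c d e f : α) (h : 1 < 6) : ![a,b,c,d,e,f] ⟨1,h⟩ = b := rfl
private lemma cvm2 {α : Type*} (a b c d e f : α) (h : 2 < 6) : ![a,b,c,d,e,f] ⟨2,h⟩ = c := rfl
private lemma cvm3 {α : Type*} (a b c d e f : α) (h : 3 < 6) : ![a,b,c,d,e,f] ⟨3,h⟩ = d := rfl
private lemma cvm4 {α : Type*} (a b c d e f : α) (h : 4 < 6) : ![a,b,c,d,e,f] ⟨4,h⟩ = e := rfl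
private lemma cvm5 {α : Type*} (a b c d e f : α) (h : 5 < 6) : ![a,b,c,d,e,f] ⟨5,h⟩ = f := rfl

private def tetraPairs : Fin 6 → {q : Fin 4 × Fin 4 // q.1 < q.2} :=
  ![⟨(0,1), by decide⟩, ⟨(0,2), by decide⟩, ⟨(0,3), by decide⟩,
    ⟨(1,2), by decide⟩, ⟨(1,3), by decide⟩, ⟨(2,3), by decide⟩]

private lemma tetraPairs_bijective : Function.Bijective tetraPairs := by decide

set_option maxRecDepth 10000 in
set_option maxHeartbeats 2000000 in
/-- For unit vectors `t₁, t₂, t₃, t₄ ∈ ℝ³` with pairwise inner products `−1/3`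
(the directions to the vertices of a regular tetrahedron), the six vectors
`(t_l − t_k, t_l × t_k) ∈ ℝ⁶`, for the six pairs `k < l`, are linearly
independent. -/
theorem tetrahedron_bracket_linearIndependent
    (t : Fin 4 → (Fin 3 → ℝ))
    (hunit : ∀ i, ∑ k, t i k * t i k = 1)
    (hdot : ∀ i j, i ≠ j → ∑ k, t i k * t j k = -(1 / 3)) :
    LinearIndependent ℝ
      (fun q : {q : Fin 4 × Fin 4 // q.1 < q.2} =>
        (Fin.append (t q.1.2 - t q.1.1)
          (crossProduct (t q.1.2) (t q.1.1)) : Fin 6 → ℝ)) := by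
  have hD : ∀ i j : Fin 4, (∑ k, t i k * t j k) = if i = j then 1 else -(1/3) := by
    intro i j
    by_cases h : i = j
    · subst h; simp [hunit]
    · simp [h, hdot i j h]
  set v : {q : Fin 4 × Fin 4 // q.1 < q.2} → (Fin 6 → ℝ) := fun q =>
    Fin.append (t q.1.2 - t q.1.1) (crossProduct (t q.1.2) (t q.1.1)) with hv
  have hg : ∀ p q : {q : Fin 4 × Fin 4 // q.1 < q.2},
      ∑ k, v p k * v q k =
        (if p.1.2 = q.1.2 then (1:ℝ) else -(1/3)) - (if p.1.2 = q.1.1 then (1:ℝ) else -(1/3))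
        - (if p.1.1 = q.1.2 then (1:ℝ) else -(1/3)) + (if p.1.1 = q.1.1 then (1:ℝ) else -(1/3))
        + (if p.1.2 = q.1.2 then (1:ℝ) else -(1/3)) * (if p.1.1 = q.1.1 then (1:ℝ) else -(1/3))
        - (if p.1.2 = q.1.1 then (1:ℝ) else -(1/3)) * (if p.1.1 = q.1.2 then (1:ℝ) else -(1/3)) := by
    intro p q
    simp only [hv, tetra_key, hD]
  rw [← linearIndependent_equiv (Equiv.ofBijective tetraPairs tetraPairs_bijective)]
  set A : Matrix (Fin 6) (Fin 6) ℝ := Matrix.of fun i j => v (tetraPairs i) j with hA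
  have hgoal : (v ∘ (Equiv.ofBijective tetraPairs tetraPairs_bijective)) = fun i => A i := rfl
  rw [hgoal]
  change LinearIndependent ℝ A.row
  rw [Matrix.linearIndependent_rows_iff_isUnit]
  have hAAT : A * Aᵀ =
      !![32/9, 8/9, 8/9, -8/9, -8/9, 0;
         8/9, 32/9, 8/9, 8/9, 0, -8/9;
         8/9, 8/9, 32/9, 0, 8/9, 8/9;
         -8/9, 8/9, 0, 32/9, 8/9, -8/9;
         -8/9, 0, 8/9, 8/9, 32/9, 8/9;
         0, -8/9, 8/9, -8/9, 8/9, 32/9] := by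
    ext i j
    rw [Matrix.mul_apply]
    simp only [Matrix.transpose_apply, hA, Matrix.of_apply]
    rw [hg]
    fin_cases i <;> fin_cases j <;>
      simp only [tetraPairs, Matrix.of_apply, cv0, cv1, cv2, cv3, cv4, cv5, cvm0, cvm1, cvm2, cvm3, cvm4, cvm5] <;>
      simp <;> norm_num
  set Ginv : Matrix (Fin 6) (Fin 6) ℝ :=
    !![3/8, -3/32, -3/32, 3/32, 3/32, 0;
       -3/32, 3/8, -3/32, -3/32, 0, 3/32;
       -3/32, -3/32, 3/8, 0, -3/32, -3/32;
       3/32, -3/32, 0, 3/8, -3/32, 3/32;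
       3/32, 0, -3/32, -3/32, 3/8, -3/32;
       0, 3/32, -3/32, 3/32, -3/32, 3/8] with hGinv
  have hone : A * (Aᵀ * Ginv) = 1 := by
    rw [← Matrix.mul_assoc, hAAT, hGinv]
    ext i j
    rw [Matrix.mul_apply]
    rw [Fin.sum_univ_six]
    fin_cases i <;> fin_cases j <;>
      simp only [Matrix.of_apply, Matrix.one_apply, cv0, cv1, cv2, cv3, cv4, cv5, cvm0, cvm1, cvm2, cvm3, cvm4, cvm5] <;>
      simp <;> norm_num
  have := invertibleOfRightInverse A (Aᵀ * Ginv) hone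
  exact isUnit_of_invertible A
end
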